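/- arXiv:1007.5334 — 4 statements merged into one kernel-verified Lean document; each statement's English description precedes it below -/
import Mathlib

section
/- Fix an integer k ≥ 2. Then every k-core is a k-shape (with respect to k), and every (k+1)-core is a k-shape (with respect to k). -/
open scoped Classical

/-! ## Basic objects: cells, partitions, hooks, `k`-boundary, `k`-shapes -/

abbrev Cell : Type := ℕ × ℕ

/-- A partition, encoded as a weakly decreasing, eventually zero function `ℕ → ℕ`
(rows are 0-indexed; a larger row index means a higher row, French convention). -/
def IsPartition (f : ℕ → ℕ) : Prop :=
  (∀ i j : ℕ, i ≤ j → f j ≤ f i) ∧ ∃ N : ℕ, ∀ i : ℕ, N ≤ i → f i = 0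

/-- The cells of the Ferrers diagram of `f`: `(i, j)` with `j < f i` (0-indexed). -/
def cellsOf (f : ℕ → ℕ) : Set Cell := {p : Cell | p.2 < f p.1}

/-- The conjugate: number of rows with at least `j + 1` cells. -/
noncomputable def conj (f : ℕ → ℕ) (j : ℕ) : ℕ := Nat.card {i : ℕ // j < f i}

/-- Hook length of the cell `p` of `f` (0-indexed version of
`(λ_i − j) + (λ^t_j − i) + 1`). -/
noncomputable def hook (f : ℕ → ℕ) (p : Cell) : ℕ :=
  (f p.1 - p.2) + (conj f p.2 - p.1) - 1

/-- The `k`-boundary: cells of `f` with hook length at most `k`. -/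
def bdry (k : ℕ) (f : ℕ → ℕ) : Set Cell := {p : Cell | p ∈ cellsOf f ∧ hook f p ≤ k}

/-- `k`-row shape: the number of cells of the `k`-boundary in row `i`. -/
noncomputable def rsK (k : ℕ) (f : ℕ → ℕ) (i : ℕ) : ℕ :=
  Nat.card {j : ℕ // (i, j) ∈ bdry k f}

/-- `k`-column shape: the number of cells of the `k`-boundary in column `j`. -/
noncomputable def csK (k : ℕ) (f : ℕ → ℕ) (j : ℕ) : ℕ :=
  Nat.card {i : ℕ // (i, j) ∈ bdry k f}

/-- A `k`-shape: a partition whose `k`-row shape and `k`-column shape are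
weakly decreasing. -/
def IsKShape (k : ℕ) (f : ℕ → ℕ) : Prop :=
  IsPartition f ∧ (∀ i j : ℕ, i ≤ j → rsK k f j ≤ rsK k f i) ∧
    ∀ i j : ℕ, i ≤ j → csK k f j ≤ csK k f i

/-- A `k`-core: a partition with no cell of hook length exactly `k`. -/
def IsKCore (k : ℕ) (f : ℕ → ℕ) : Prop :=
  IsPartition f ∧ ∀ p ∈ cellsOf f, hook f p ≠ k

/-! ## Strings and moves -/

/-- Diagonal index of a cell. -/
def diagIdx (p : Cell) : ℤ := (p.2 : ℤ) - (p.1 : ℤ)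

/-- Two cells are contiguous when their diagonal indices differ by `k` or `k+1`. -/
def Contiguous (k : ℕ) (p q : Cell) : Prop :=
  (diagIdx p - diagIdx q).natAbs = k ∨ (diagIdx p - diagIdx q).natAbs = k + 1

/-- `a` lists the cells of the skew shape `g / f` from top to bottom, with
successive cells contiguous and in strictly lower rows: a string. -/
def IsString (k : ℕ) (f g : ℕ → ℕ) (a : List Cell) : Prop :=
  IsPartition f ∧ IsPartition g ∧ (∀ i, f i ≤ g i) ∧ a ≠ [] ∧
    cellsOf g \ cellsOf f = {x : Cell | x ∈ a} ∧
    List.Chain' (fun x y : Cell => y.1 < x.1 ∧ Contiguous k x y) a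

/-- `b` is the leftmost cell of the `k`-boundary of `f` in row `r`. -/
def IsLeftmostBdryInRow (k : ℕ) (f : ℕ → ℕ) (r : ℕ) (b : Cell) : Prop :=
  b ∈ bdry k f ∧ b.1 = r ∧ ∀ c : ℕ, (r, c) ∈ bdry k f → b.2 ≤ c

/-- `b` is the bottom cell of the `k`-boundary of `f` in column `c`. -/
def IsBottomBdryInCol (k : ℕ) (f : ℕ → ℕ) (c : ℕ) (b : Cell) : Prop :=
  b ∈ bdry k f ∧ b.2 = c ∧ ∀ r : ℕ, (r, c) ∈ bdry k f → b.1 ≤ r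

/-- The cell `b₀` (the leftmost boundary cell in the row of the top cell of the
string `a`) exists and has hook length exactly `k`. -/
def B0HookK (k : ℕ) (f : ℕ → ℕ) (a : List Cell) : Prop :=
  ∃ h b : Cell, a.head? = some h ∧ IsLeftmostBdryInRow k f h.1 b ∧ hook f b = k

/-- The cell `b_ℓ` (the bottom boundary cell in the column of the bottom cell of
the string `a`) exists and has hook length exactly `k`. -/
def BlHookK (k : ℕ) (f : ℕ → ℕ) (a : List Cell) : Prop :=
  ∃ h b : Cell, a.getLast? = some h ∧ IsBottomBdryInCol k f h.2 b ∧ hook f b = k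

def RowType (k : ℕ) (f : ℕ → ℕ) (a : List Cell) : Prop := B0HookK k f a ∧ ¬ BlHookK k f a

def ColType (k : ℕ) (f : ℕ → ℕ) (a : List Cell) : Prop := ¬ B0HookK k f a ∧ BlHookK k f a

def CoverType (k : ℕ) (f : ℕ → ℕ) (a : List Cell) : Prop := ¬ B0HookK k f a ∧ ¬ BlHookK k f a

def CocoverType (k : ℕ) (f : ℕ → ℕ) (a : List Cell) : Prop := B0HookK k f a ∧ BlHookK k f a

/-- `k`-row shape extended to integer row indices (0 outside `ℕ`). -/
noncomputable def rsZ (k : ℕ) (f : ℕ → ℕ) (r : ℤ) : ℤ :=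
  if 0 ≤ r then (rsK k f r.toNat : ℤ) else 0

/-- `k`-column shape extended to integer column indices (0 outside `ℕ`). -/
noncomputable def csZ (k : ℕ) (f : ℕ → ℕ) (c : ℤ) : ℤ :=
  if 0 ≤ c then (csK k f c.toNat : ℤ) else 0

/-- The strings `a = g/f` and `b = g'/f'` are translates of each other: the
cells correspond under translation by a fixed vector `v`, the row/column shape
changes correspond under `v`, and corresponding modified rows/columns have the
same size. -/
def TranslateStrings (k : ℕ) (f g f' g' : ℕ → ℕ) (a b : List Cell) : Prop :=
  ∃ v : ℤ × ℤ, a.length = b.length ∧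
    (∀ (i : ℕ) (x y : Cell), a[i]? = some x → b[i]? = some y →
      (y.1 : ℤ) = (x.1 : ℤ) + v.1 ∧ (y.2 : ℤ) = (x.2 : ℤ) + v.2) ∧
    (∀ r : ℤ, rsZ k g r - rsZ k f r = rsZ k g' (r + v.1) - rsZ k f' (r + v.1) ∧
      (rsZ k g r ≠ rsZ k f r → rsZ k f r = rsZ k f' (r + v.1))) ∧
    (∀ c : ℤ, csZ k g c - csZ k f c = csZ k g' (c + v.2) - csZ k f' (c + v.2) ∧
      (csZ k g c ≠ csZ k f c → csZ k f c = csZ k f' (c + v.2)))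

/-- The common data of a row or column move from `lam` to `mu`: a chain of
partitions `lam = shape 0 ⊂ shape 1 ⊂ ⋯ ⊂ shape rank = mu` whose successive
differences are strings of a common length that are translates of each other,
with `lam` and `mu` both `k`-shapes. -/
structure PreMove (k : ℕ) (lam mu : ℕ → ℕ) where
  rank : ℕ
  len : ℕ
  rank_pos : 0 < rank
  len_pos : 0 < len
  shape : ℕ → ℕ → ℕ
  strs : ℕ → List Cell
  shape_zero : shape 0 = lam
  shape_rank : shape rank = mu
  src_kshape : IsKShape k lam
  tgt_kshape : IsKShape k mu
  isStr : ∀ i < rank, IsString k (shape i) (shape (i + 1)) (strs i)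
  strLen : ∀ i < rank, (strs i).length = len
  translates : ∀ i < rank, ∀ j < rank,
    TranslateStrings k (shape i) (shape (i + 1)) (shape j) (shape (j + 1)) (strs i) (strs j)

/-- A row move: all strings are row-type and their top cells occur in
consecutive columns from left to right. -/
def PreMove.IsRowMove {k : ℕ} {lam mu : ℕ → ℕ} (m : PreMove k lam mu) : Prop :=
  (∀ i < m.rank, RowType k (m.shape i) (m.strs i)) ∧
    ∀ i : ℕ, i + 1 < m.rank → ∀ x y : Cell,
      (m.strs i).head? = some x → (m.strs (i + 1)).head? = some y → y.2 = x.2 + 1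

/-- A column move: all strings are column-type and their bottom cells occur in
consecutive rows from bottom to top. -/
def PreMove.IsColMove {k : ℕ} {lam mu : ℕ → ℕ} (m : PreMove k lam mu) : Prop :=
  (∀ i < m.rank, ColType k (m.shape i) (m.strs i)) ∧
    ∀ i : ℕ, i + 1 < m.rank → ∀ x y : Cell,
      (m.strs i).getLast? = some x → (m.strs (i + 1)).getLast? = some y → y.1 = x.1 + 1

/-- A move is a row move or a column move. -/
def PreMove.IsMove {k : ℕ} {lam mu : ℕ → ℕ} (m : PreMove k lam mu) : Prop :=
  m.IsRowMove ∨ m.IsColMove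

/-- There is a move from `lam` to `mu`. -/
def MoveRel (k : ℕ) (lam mu : ℕ → ℕ) : Prop := ∃ m : PreMove k lam mu, m.IsMove

/-- A `f`-addable corner: a cell outside `f` which together with `f` forms the
diagram of a partition. -/
def IsAddableCorner (f : ℕ → ℕ) (x : Cell) : Prop :=
  x ∉ cellsOf f ∧ ∃ g : ℕ → ℕ, IsPartition g ∧ cellsOf g = cellsOf f ∪ {x}

/-! ## Strips -/

/-- The skew shape `g / f` has at most one cell in each column. -/
def OneCellPerCol (f g : ℕ → ℕ) : Prop :=
  ∀ x y : Cell, x ∈ cellsOf g \ cellsOf f → y ∈ cellsOf g \ cellsOf f → x.2 = y.2 → x = y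

/-- The skew shape `g / f` has at most one cell in each row. -/
def OneCellPerRow (f g : ℕ → ℕ) : Prop :=
  ∀ x y : Cell, x ∈ cellsOf g \ cellsOf f → y ∈ cellsOf g \ cellsOf f → x.1 = y.1 → x = y

/-- `mu / lam` is a strip of rank `r` of `k`-shapes: a horizontal strip such
that `rs(mu)/rs(lam)` is a horizontal strip and `cs(mu)/cs(lam)` is a vertical
strip, both of size `r`. -/
def IsStrip (k r : ℕ) (lam mu : ℕ → ℕ) : Prop :=
  IsKShape k lam ∧ IsKShape k mu ∧ (∀ i, lam i ≤ mu i) ∧ OneCellPerCol lam mu ∧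
    (∀ i, rsK k lam i ≤ rsK k mu i) ∧ OneCellPerCol (rsK k lam) (rsK k mu) ∧
    (∀ j, csK k lam j ≤ csK k mu j) ∧ OneCellPerRow (csK k lam) (csK k mu) ∧
    (∑ᶠ i : ℕ, (rsK k mu i - rsK k lam i)) = r ∧
    (∑ᶠ j : ℕ, (csK k mu j - csK k lam j)) = r

/-- `mu / lam` is a strip (of some rank). -/
def IsStripAny (k : ℕ) (lam mu : ℕ → ℕ) : Prop := ∃ r : ℕ, IsStrip k r lam mu

/-- A maximal strip: it admits no `lam`-augmentation move. -/
def MaximalStrip (k : ℕ) (lam mu : ℕ → ℕ) : Prop :=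
  IsStripAny k lam mu ∧ ¬ ∃ nu : ℕ → ℕ, MoveRel k mu nu ∧ IsStripAny k lam nu

/-- A reverse-maximal strip `mu / rho`: there is no move from `rho` to a
`k`-shape `rho'` with `mu / rho'` again a strip. -/
def ReverseMaximalStrip (k : ℕ) (rho mu : ℕ → ℕ) : Prop :=
  IsStripAny k rho mu ∧ ¬ ∃ rho' : ℕ → ℕ, MoveRel k rho rho' ∧ IsStripAny k rho' mu

/-- Adjoin the cell `a` at the end of its row. -/
def addCell (f : ℕ → ℕ) (a : Cell) : ℕ → ℕ := Function.update f a.1 (f a.1 + 1)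

/-- A lower augmentable corner of the strip `mu / lam`: a `mu`-addable corner
`a` whose adjunction expels from the `k`-boundary a cell of `∂mu` in the row of
`a` and in a modified column of the strip. -/
def LowerAugCorner (k : ℕ) (lam mu : ℕ → ℕ) (a : Cell) : Prop :=
  IsAddableCorner mu a ∧ ∃ b : Cell, b ∈ bdry k mu ∧ b.1 = a.1 ∧
    csK k mu b.2 = csK k lam b.2 + 1 ∧ k < hook (addCell mu a) b

/-- An upper augmentable corner of the strip `mu / lam`: a `mu`-addable corner
`a`, not lying directly on top of a cell of the strip, whose adjunction expels
from the `k`-boundary a cell of `∂mu` in the column of `a` and in a modified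
row of the strip. -/
def UpperAugCorner (k : ℕ) (lam mu : ℕ → ℕ) (a : Cell) : Prop :=
  IsAddableCorner mu a ∧ (a.1 = 0 ∨ (a.1 - 1, a.2) ∉ cellsOf mu \ cellsOf lam) ∧
    ∃ b : Cell, b ∈ bdry k mu ∧ b.2 = a.2 ∧
      rsK k mu b.1 = rsK k lam b.1 + 1 ∧ k < hook (addCell mu a) b

/-! ## Paths in the `k`-shape poset and their equivalence -/

/-- Charge of a step from `f` to `g`: 0 for a row move or an empty move, the
number of cells for a column move. -/
noncomputable def stepCharge (k : ℕ) (f g : ℕ → ℕ) : ℕ :=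
  if ∃ m : PreMove k f g, m.IsColMove then (cellsOf g \ cellsOf f).ncard else 0

/-- A path in the `k`-shape poset from `lam` to `nu`, recorded by its list of
vertices; each step is an empty move or a move. -/
def IsPathList (k : ℕ) (lam nu : ℕ → ℕ) (p : List (ℕ → ℕ)) : Prop :=
  p.head? = some lam ∧ p.getLast? = some nu ∧
    List.Chain' (fun f g => f = g ∨ MoveRel k f g) p

/-- The charge of a path: the sum of the charges of its steps. -/
noncomputable def pathCharge (k : ℕ) (p : List (ℕ → ℕ)) : ℕ :=
  (List.zipWith (stepCharge k) p p.tail).sum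

/-- The equivalence on paths generated by diamond equivalences (and by
insertion of empty moves). -/
inductive PathEquiv (k : ℕ) : List (ℕ → ℕ) → List (ℕ → ℕ) → Prop
  | refl (p : List (ℕ → ℕ)) : PathEquiv k p p
  | symm {p q : List (ℕ → ℕ)} : PathEquiv k p q → PathEquiv k q p
  | trans {p q r : List (ℕ → ℕ)} : PathEquiv k p q → PathEquiv k q r → PathEquiv k p r
  | pad (pre post : List (ℕ → ℕ)) (κ : ℕ → ℕ) :
      PathEquiv k (pre ++ κ :: post) (pre ++ κ :: κ :: post)
  | diamond (pre post : List (ℕ → ℕ)) (κ μ ν γ : ℕ → ℕ)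
      (h1 : κ = μ ∨ MoveRel k κ μ) (h2 : μ = γ ∨ MoveRel k μ γ)
      (h3 : κ = ν ∨ MoveRel k κ ν) (h4 : ν = γ ∨ MoveRel k ν γ)
      (hcells : (cellsOf μ \ cellsOf κ) ∪ (cellsOf γ \ cellsOf μ)
          = (cellsOf ν \ cellsOf κ) ∪ (cellsOf γ \ cellsOf ν))
      (hcharge : stepCharge k κ μ + stepCharge k μ γ = stepCharge k κ ν + stepCharge k ν γ) :
      PathEquiv k (pre ++ κ :: μ :: γ :: post) (pre ++ κ :: ν :: γ :: post)

/-- The type of paths in the `k`-shape poset from `lam` to `nu`. -/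
def PathsTo (k : ℕ) (lam nu : ℕ → ℕ) : Type :=
  {p : List (ℕ → ℕ) // IsPathList k lam nu p}

def kPathSetoid (k : ℕ) (lam nu : ℕ → ℕ) : Setoid (PathsTo k lam nu) where
  r p q := PathEquiv k p.1 q.1
  iseqv := ⟨fun p => PathEquiv.refl p.1, fun h => PathEquiv.symm h,
    fun h h' => PathEquiv.trans h h'⟩

/-- Equivalence classes of paths from `lam` to `nu` in the `k`-shape poset. -/
def Patheq (k : ℕ) (lam nu : ℕ → ℕ) : Type := Quotient (kPathSetoid k lam nu)

/-! ## Tableaux -/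

/-- A step of a `k`-shape tableau: a strip of rank strictly less than `k`. -/
def StripStep (k : ℕ) (f g : ℕ → ℕ) : Prop := ∃ r : ℕ, r < k ∧ IsStrip k r f g

/-- A `k`-shape tableau of shape `mu / lam`, recorded by its chain of shapes. -/
def IsTableau (k : ℕ) (lam mu : ℕ → ℕ) (T : List (ℕ → ℕ)) : Prop :=
  T.head? = some lam ∧ T.getLast? = some mu ∧ List.Chain' (StripStep k) T

/-- A maximal `k`-shape tableau: each of its strips is maximal. -/
def IsMaxTableau (k : ℕ) (lam mu : ℕ → ℕ) (T : List (ℕ → ℕ)) : Prop :=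
  IsTableau k lam mu T ∧ List.Chain' (MaximalStrip k) T

/-- A reverse-maximal `k`-shape tableau: each of its strips is reverse-maximal. -/
def IsRevMaxTableau (k : ℕ) (lam mu : ℕ → ℕ) (T : List (ℕ → ℕ)) : Prop :=
  IsTableau k lam mu T ∧ List.Chain' (ReverseMaximalStrip k) T

/-- The rank of the strip `g / f`. -/
noncomputable def stripRank (k : ℕ) (f g : ℕ → ℕ) : ℕ :=
  ∑ᶠ i : ℕ, (rsK k g i - rsK k f i)

/-- The weight of a tableau: the list of ranks of its strips. -/
noncomputable def tabWeight (k : ℕ) (T : List (ℕ → ℕ)) : List ℕ :=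
  List.zipWith (stripRank k) T T.tail

/-- The indent of a cell `b` in the skew shape `mu / lam`: the number of its
cells strictly to the left of `b` in the row of `b`. -/
noncomputable def indent (lam mu : ℕ → ℕ) (b : Cell) : ℕ :=
  Nat.card {x : Cell // x ∈ cellsOf mu \ cellsOf lam ∧ x.1 = b.1 ∧ x.2 < b.2}

/-- A `lam`-augmentation path from `mu` to `nu`: a path in the `k`-shape poset
all of whose vertices `rho` satisfy that `rho / lam` is a strip. -/
def IsAugPath (k : ℕ) (lam mu nu : ℕ → ℕ) (p : List (ℕ → ℕ)) : Prop :=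
  IsPathList k mu nu p ∧ ∀ rho ∈ p, IsStripAny k lam rho

section CoreShape

variable {f : ℕ → ℕ}

lemma conj_spec (hp : IsPartition f) (j i : ℕ) : i < conj f j ↔ j < f i := by
  obtain ⟨hmono, N, hN⟩ := hp
  have hne : {i : ℕ | f i ≤ j}.Nonempty := ⟨N, by simp [hN N le_rfl]⟩
  set n := sInf {i : ℕ | f i ≤ j} with hn
  have hsetn : f n ≤ j := Nat.sInf_mem hne
  have hset : {i : ℕ | j < f i} = Set.Iio n := by
    ext i
    simp only [Set.mem_setOf_eq, Set.mem_Iio]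
    constructor
    · intro h
      by_contra hni
      push_neg at hni
      have := hmono n i hni
      omega
    · intro h
      have hi := Nat.notMem_of_lt_sInf (by rw [← hn]; exact h)
      simp only [Set.mem_setOf_eq] at hi
      omega
  have hcard : conj f j = n := by
    have he : {i : ℕ // j < f i} ≃ Fin n :=
      { toFun := fun x => ⟨x.1, by
          have := x.2
          have : x.1 ∈ Set.Iio n := hset ▸ (by simpa using this)
          simpa using this⟩
        invFun := fun x => ⟨x.1, by
          have : (x.1 : ℕ) ∈ {i : ℕ | j < f i} := by rw [hset]; simpa using x.2
          simpa using this⟩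
        left_inv := fun x => rfl
        right_inv := fun x => rfl }
    simpa [conj] using Nat.card_congr he
  rw [hcard]
  constructor
  · intro h
    by_contra hni
    push_neg at hni
    have := Nat.notMem_of_lt_sInf (show i < n from h)
    simp only [Set.mem_setOf_eq] at this
    omega
  · intro h
    by_contra hni
    push_neg at hni
    have := hmono n i hni
    omega

lemma conj_anti (hp : IsPartition f) {j j' : ℕ} (h : j ≤ j') :
    conj f j' ≤ conj f j := by
  by_contra hc
  push_neg at hc
  have h1 : j' < f (conj f j) := (conj_spec hp j' (conj f j)).1 hc
  have h2 : j < f (conj f j) := lt_of_le_of_lt h h1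
  have := (conj_spec hp j (conj f j)).2 h2
  omega

lemma core_shape {k t : ℕ} (hp : IsPartition f) (ht : k ≤ t) (ht2 : t ≤ k + 1)
    (hc : ∀ p ∈ cellsOf f, hook f p ≠ t) : IsKShape k f := by
  have hmono := hp.1
  have hfin_row : ∀ i : ℕ, Finite {j : ℕ // (i, j) ∈ bdry k f} := by
    intro i
    have hsub : {j : ℕ | (i, j) ∈ bdry k f} ⊆ Set.Iio (f i) := by
      intro j hj
      exact hj.1
    exact ((Set.finite_Iio (f i)).subset hsub).to_subtype
  have hfin_col : ∀ j : ℕ, Finite {i : ℕ // (i, j) ∈ bdry k f} := by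
    intro j
    have hsub : {i : ℕ | (i, j) ∈ bdry k f} ⊆ Set.Iio (conj f j) := by
      intro i hi
      exact (conj_spec hp j i).2 hi.1
    exact ((Set.finite_Iio (conj f j)).subset hsub).to_subtype
  refine ⟨hp, ?_, ?_⟩
  · -- rows
    have hstep : ∀ i : ℕ, rsK k f (i + 1) ≤ rsK k f i := by
      intro i
      set d := f i - f (i + 1) with hd
      have hfle : f (i + 1) ≤ f i := hmono i (i + 1) (Nat.le_succ i)
      have hF : ∀ j : ℕ, (i + 1, j) ∈ bdry k f → (i, j + d) ∈ bdry k f := by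
        intro j hj
        obtain ⟨hcell, hhook⟩ := hj
        have hcell' : j < f (i + 1) := hcell
        have hcell2 : j + d < f i := by omega
        have hc1 : i + 1 < conj f j := (conj_spec hp j (i + 1)).2 hcell'
        have hc2 : i < conj f (j + d) := (conj_spec hp (j + d) i).2 hcell2
        have hc21 : conj f (j + d) ≤ conj f j := conj_anti hp (Nat.le_add_right j d)
        have hne1 : hook f (i, j + d) ≠ t := hc _ hcell2
        have hne2 : hook f (i + 1, j) ≠ t := hc _ hcell'
        refine ⟨hcell2, ?_⟩
        simp only [hook] at hhook hne1 hne2 ⊢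
        omega
      have := hfin_row i
      have hinj : Function.Injective
          (fun x : {j : ℕ // (i + 1, j) ∈ bdry k f} =>
            (⟨x.1 + d, hF x.1 x.2⟩ : {j : ℕ // (i, j) ∈ bdry k f})) := by
        intro a b hab
        simp only [Subtype.mk.injEq] at hab
        exact Subtype.ext (by omega)
      exact Nat.card_le_card_of_injective _ hinj
    intro i j hij
    exact antitone_nat_of_succ_le hstep hij
  · -- columns
    have hstep : ∀ j : ℕ, csK k f (j + 1) ≤ csK k f j := by
      intro j
      set e := conj f j - conj f (j + 1) with he
      have hcle : conj f (j + 1) ≤ conj f j := conj_anti hp (Nat.le_succ j)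
      have hF : ∀ i : ℕ, (i, j + 1) ∈ bdry k f → (i + e, j) ∈ bdry k f := by
        intro i hi
        obtain ⟨hcell, hhook⟩ := hi
        have hcell' : j + 1 < f i := hcell
        have hc2 : i < conj f (j + 1) := (conj_spec hp (j + 1) i).2 hcell'
        have hc1 : i + e < conj f j := by omega
        have hcell2 : j < f (i + e) := (conj_spec hp j (i + e)).1 hc1
        have hfle : f (i + e) ≤ f i := hmono i (i + e) (Nat.le_add_right i e)
        have hne1 : hook f (i + e, j) ≠ t := hc _ hcell2
        have hne2 : hook f (i, j + 1) ≠ t := hc _ hcell'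
        refine ⟨hcell2, ?_⟩
        simp only [hook] at hhook hne1 hne2 ⊢
        omega
      have := hfin_col j
      have hinj : Function.Injective
          (fun x : {i : ℕ // (i, j + 1) ∈ bdry k f} =>
            (⟨x.1 + e, hF x.1 x.2⟩ : {i : ℕ // (i, j) ∈ bdry k f})) := by
        intro a b hab
        simp only [Subtype.mk.injEq] at hab
        exact Subtype.ext (by omega)
      exact Nat.card_le_card_of_injective _ hinj
    intro i j hij
    exact antitone_nat_of_succ_le hstep hij

end CoreShape

/-- Fix `k ≥ 2`. Every `k`-core is a `k`-shape, and every
`(k+1)`-core is a `k`-shape. -/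
theorem statement_0 (k : ℕ) (hk : 2 ≤ k) (lam : ℕ → ℕ) :
    (IsKCore k lam → IsKShape k lam) ∧ (IsKCore (k + 1) lam → IsKShape k lam) := by
  constructor
  · rintro ⟨hp, hc⟩
    exact core_shape hp le_rfl (Nat.le_succ k) hc
  · rintro ⟨hp, hc⟩
    exact core_shape hp (Nat.le_succ k) le_rfl hc
end

section
/- Let m be a row move from λ to μ. If m negatively modifies a column c (i.e., cs(μ)_c < cs(λ)_c), then m negatively modifies every column c′ > c with cs(λ)_{c′} = cs(λ)_c. If m positively modifies a column c (i.e., cs(μ)_c > cs(λ)_c), then m positively modifies every column c′ < c with cs(λ)_{c′} = cs(λ)_c. -/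
open scoped Classical

/-- a row move negatively modifying a column negatively modifies
all further columns of the same size to the right, and positively modifying a
column positively modifies all columns of the same size to the left. -/
theorem statement_7 (k : ℕ) (hk : 2 ≤ k) (lam mu : ℕ → ℕ) (m : PreMove k lam mu)
    (hm : m.IsRowMove) :
    (∀ c : ℕ, csK k mu c < csK k lam c →
      ∀ c' : ℕ, c < c' → csK k lam c' = csK k lam c → csK k mu c' < csK k lam c') ∧
    (∀ c : ℕ, csK k lam c < csK k mu c →
      ∀ c' : ℕ, c' < c → csK k lam c' = csK k lam c → csK k lam c' < csK k mu c') := by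
  obtain ⟨_, _, hcs⟩ := m.tgt_kshape
  constructor
  · intro c hc c' hcc' heq
    calc csK k mu c' ≤ csK k mu c := hcs c c' (le_of_lt hcc')
      _ < csK k lam c := hc
      _ = csK k lam c' := heq.symm
  · intro c hc c' hcc' heq
    calc csK k lam c' = csK k lam c := heq
      _ < csK k mu c := hc
      _ ≤ csK k mu c' := hcs c' c (le_of_lt hcc')
end

section
/- Every strip S = μ/λ of k-shapes has rank at most k. -/
open scoped Classical

lemma conj_finite (f : ℕ → ℕ) (hf : IsPartition f) (j : ℕ) :
    Finite {i : ℕ // j < f i} := by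
  obtain ⟨N, hN⟩ := hf.2
  have : {i : ℕ | j < f i} ⊆ Set.Iio N := by
    intro i hi
    by_contra h
    simp only [Set.mem_Iio, not_lt] at h
    have := hN i h
    simp only [Set.mem_setOf_eq, this] at hi
    omega
  exact ((Set.finite_Iio N).subset this).to_subtype

lemma conj_mono (f : ℕ → ℕ) (hf : IsPartition f) {j j' : ℕ} (h : j ≤ j') :
    conj f j' ≤ conj f j := by
  haveI := conj_finite f hf j
  exact Nat.card_le_card_of_injective
    (fun x => ⟨x.1, lt_of_le_of_lt h x.2⟩)
    (fun a b hab => Subtype.ext (by simpa using congrArg Subtype.val hab))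

lemma conj_ge (f : ℕ → ℕ) (hf : IsPartition f) {i j : ℕ} (h : j < f i) :
    i + 1 ≤ conj f j := by
  haveI := conj_finite f hf j
  have : Nat.card (Fin (i + 1)) ≤ Nat.card {i : ℕ // j < f i} :=
    Nat.card_le_card_of_injective
      (fun m => ⟨m.1, lt_of_lt_of_le h (hf.1 m.1 i (Nat.lt_succ_iff.mp m.2))⟩)
      (fun a b hab => Fin.ext (by simpa using congrArg Subtype.val hab))
  simpa [conj] using this

lemma hook_strict (f : ℕ → ℕ) (hf : IsPartition f) {i j1 j2 : ℕ}
    (h12 : j1 < j2) (h2 : j2 < f i) : hook f (i, j2) < hook f (i, j1) := by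
  have h1 : j1 < f i := lt_trans h12 h2
  have c1 := conj_ge f hf h1
  have c2 := conj_ge f hf h2
  have cm := conj_mono f hf (le_of_lt h12)
  simp only [hook]
  omega

lemma rsK_le (k : ℕ) (f : ℕ → ℕ) (hf : IsPartition f) (i : ℕ) :
    rsK k f i ≤ k := by
  have hhook : ∀ s : {j : ℕ // (i, j) ∈ bdry k f},
      1 ≤ hook f (i, s.1) ∧ hook f (i, s.1) ≤ k := by
    rintro ⟨j, ⟨hcell, hhk⟩⟩
    refine ⟨?_, hhk⟩
    have h1 : j < f i := hcell
    have c1 := conj_ge f hf h1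
    simp only [hook]
    omega
  have : Nat.card {j : ℕ // (i, j) ∈ bdry k f} ≤ Nat.card (Fin k) := by
    refine Nat.card_le_card_of_injective
      (fun s => ⟨hook f (i, s.1) - 1, by have := hhook s; omega⟩) ?_
    intro a b hab
    have hab' : hook f (i, a.1) = hook f (i, b.1) := by
      have ha := hhook a; have hb := hhook b
      have := congrArg Fin.val hab
      simp only at this
      omega
    rcases lt_trichotomy a.1 b.1 with h | h | h
    · exact absurd hab' (by have := hook_strict f hf (i := i) h (show b.1 < f i from b.2.1); omega)
    · exact Subtype.ext h
    · exact absurd hab' (by have := hook_strict f hf (i := i) h (show a.1 < f i from a.2.1); omega)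
  simpa [rsK] using this

lemma rsK_eq_zero (k : ℕ) (f : ℕ → ℕ) {i : ℕ} (h : f i = 0) : rsK k f i = 0 := by
  haveI : IsEmpty {j : ℕ // (i, j) ∈ bdry k f} := by
    constructor
    rintro ⟨j, ⟨hcell, -⟩⟩
    have : j < f i := hcell
    omega
  simp [rsK]

/-- every strip of `k`-shapes has rank at most `k`. -/
theorem statement_10 (k : ℕ) (hk : 2 ≤ k) (r : ℕ) (lam mu : ℕ → ℕ)
    (h : IsStrip k r lam mu) : r ≤ k := by
  obtain ⟨hlamK, hmuK, hle, hcol, hrsle, hrscol, hcsle, hcsrow, hrsum, hcsum⟩ := h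
  have hmup : IsPartition mu := hmuK.1
  obtain ⟨N, hN⟩ := hmup.2
  have hsupp : Function.support (fun i => rsK k mu i - rsK k lam i)
      ⊆ ((Finset.range N : Finset ℕ) : Set ℕ) := by
    intro i hi
    simp only [Function.mem_support] at hi
    by_contra hc
    simp only [Finset.coe_range, Set.mem_Iio, not_lt] at hc
    have := rsK_eq_zero k mu (hN i hc)
    omega
  rw [← hrsum, finsum_eq_sum_of_support_subset _ hsupp]
  set T : ℕ → Finset ℕ := fun i => Finset.Ico (rsK k lam i) (rsK k mu i) with hT
  have hdisj : ∀ i ∈ Finset.range N, ∀ j ∈ Finset.range N, i ≠ j → Disjoint (T i) (T j) := by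
    intro i _ j _ hij
    rw [Finset.disjoint_left]
    intro c hci hcj
    simp only [hT, Finset.mem_Ico] at hci hcj
    have hx : ((i, c) : Cell) ∈ cellsOf (rsK k mu) \ cellsOf (rsK k lam) :=
      ⟨hci.2, fun hcon => by exact absurd (show c < rsK k lam i from hcon) (by omega)⟩
    have hy : ((j, c) : Cell) ∈ cellsOf (rsK k mu) \ cellsOf (rsK k lam) :=
      ⟨hcj.2, fun hcon => by exact absurd (show c < rsK k lam j from hcon) (by omega)⟩
    have := hrscol (i, c) (j, c) hx hy rfl
    exact hij (congrArg Prod.fst this)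
  calc ∑ i ∈ Finset.range N, (rsK k mu i - rsK k lam i)
      = ∑ i ∈ Finset.range N, (T i).card := by simp [hT, Nat.card_Ico]
    _ = ((Finset.range N).biUnion T).card := (Finset.card_biUnion hdisj).symm
    _ ≤ (Finset.range k).card := by
        refine Finset.card_le_card ?_
        intro c hc
        simp only [Finset.mem_biUnion, hT, Finset.mem_Ico, Finset.mem_range] at hc ⊢
        obtain ⟨i, -, -, h2⟩ := hc
        exact lt_of_lt_of_le h2 (rsK_le k mu hmup i)
    _ = k := Finset.card_range k
end

section
/- If S = μ/λ is a strip of k-shapes, then ∂λ \ ∂μ is a horizontal strip (it has at most one cell in each column). -/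
open scoped Classical

/-! ## Auxiliary lemmas for Statement 12 -/

lemma aux_colFinite {f : ℕ → ℕ} (hf : IsPartition f) (j : ℕ) :
    {i : ℕ | j < f i}.Finite := by
  obtain ⟨N, hN⟩ := hf.2
  apply Set.Finite.subset (Set.finite_Iio N)
  intro i hi
  simp only [Set.mem_setOf_eq] at hi
  by_contra hc
  simp only [Set.mem_Iio, not_lt] at hc
  have := hN i hc
  omega

lemma aux_conj_eq_ncard (f : ℕ → ℕ) (j : ℕ) :
    conj f j = ({i : ℕ | j < f i}).ncard := by
  rw [conj, ← Nat.card_coe_set_eq]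
  rfl

lemma aux_mem_iff_lt_conj {f : ℕ → ℕ} (hf : IsPartition f) (i j : ℕ) :
    j < f i ↔ i < conj f j := by
  have hfin := aux_colFinite hf j
  constructor
  · intro hij
    have hsub : Set.Iic i ⊆ {i' : ℕ | j < f i'} := by
      intro i' hi'
      exact lt_of_lt_of_le hij (hf.1 i' i hi')
    have hcard := Set.ncard_le_ncard hsub hfin
    have h1 : (Set.Iic i).ncard = i + 1 := by
      rw [← Nat.card_coe_set_eq]; simp [Nat.card_Iic]
    rw [h1, ← aux_conj_eq_ncard] at hcard
    omega
  · intro hic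
    by_contra hij
    have hsub : {i' : ℕ | j < f i'} ⊆ Set.Iio i := by
      intro i' hi'
      simp only [Set.mem_setOf_eq] at hi'
      simp only [Set.mem_Iio]
      by_contra hc
      push_neg at hc
      exact hij (lt_of_lt_of_le hi' (hf.1 i i' hc))
    have hcard := Set.ncard_le_ncard hsub (Set.finite_Iio i)
    have h1 : (Set.Iio i).ncard = i := by
      rw [← Nat.card_coe_set_eq]; simp
    rw [h1, ← aux_conj_eq_ncard] at hcard
    omega

lemma aux_bdry_up {k : ℕ} {f : ℕ → ℕ} (hf : IsPartition f) {i i' j : ℕ}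
    (hb : (i, j) ∈ bdry k f) (hii' : i ≤ i') (hi' : i' < conj f j) :
    (i', j) ∈ bdry k f := by
  obtain ⟨hcell, hhook⟩ := hb
  have hcell' : j < f i' := (aux_mem_iff_lt_conj hf i' j).2 hi'
  have hcf : f i' ≤ f i := hf.1 i i' hii'
  have hcelli : j < f i := hcell
  refine ⟨hcell', ?_⟩
  simp only [hook] at hhook ⊢
  omega

lemma aux_csK_eq_ncard (k : ℕ) (f : ℕ → ℕ) (j : ℕ) :
    csK k f j = ({i : ℕ | (i, j) ∈ bdry k f}).ncard := by
  rw [csK, ← Nat.card_coe_set_eq]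
  rfl

lemma aux_bdry_col_finite {k : ℕ} {f : ℕ → ℕ} (hf : IsPartition f) (j : ℕ) :
    ({i : ℕ | (i, j) ∈ bdry k f}).Finite := by
  apply Set.Finite.subset (aux_colFinite hf j)
  intro i hi
  exact hi.1

/-- If `x` is a boundary cell then it is at most `csK` rows below the top of
its column. -/
lemma aux_lower_bound {k : ℕ} {f : ℕ → ℕ} (hf : IsPartition f) {i j : ℕ}
    (hb : (i, j) ∈ bdry k f) : conj f j ≤ i + csK k f j := by
  have hic : i < conj f j := (aux_mem_iff_lt_conj hf i j).1 hb.1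
  have hsub : Set.Ico i (conj f j) ⊆ {i' : ℕ | (i', j) ∈ bdry k f} := by
    intro i' hi'
    simp only [Set.mem_Ico] at hi'
    exact aux_bdry_up hf hb hi'.1 hi'.2
  have hcard := Set.ncard_le_ncard hsub (aux_bdry_col_finite hf j)
  have h1 : (Set.Ico i (conj f j)).ncard = conj f j - i := by
    rw [← Nat.card_coe_set_eq]; simp
  rw [h1, ← aux_csK_eq_ncard] at hcard
  omega

/-- If `x` is a cell not in the boundary then it is strictly more than `csK`
rows below the top of its column. -/
lemma aux_upper_bound {k : ℕ} {f : ℕ → ℕ} (hf : IsPartition f) {i j : ℕ}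
    (hcell : j < f i) (hb : (i, j) ∉ bdry k f) : i + csK k f j + 1 ≤ conj f j := by
  have hic : i < conj f j := (aux_mem_iff_lt_conj hf i j).1 hcell
  have hsub : {i' : ℕ | (i', j) ∈ bdry k f} ⊆ Set.Ioo i (conj f j) := by
    intro i' hi'
    simp only [Set.mem_setOf_eq] at hi'
    have hi'c : i' < conj f j := (aux_mem_iff_lt_conj hf i' j).1 hi'.1
    simp only [Set.mem_Ioo]
    refine ⟨?_, hi'c⟩
    by_contra hc
    push_neg at hc
    exact hb (aux_bdry_up hf hi' hc hic)
  have hcard := Set.ncard_le_ncard hsub (Set.finite_Ioo i (conj f j))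
  have h1 : (Set.Ioo i (conj f j)).ncard = conj f j - i - 1 := by
    rw [← Nat.card_coe_set_eq]; simp
  rw [h1, ← aux_csK_eq_ncard] at hcard
  omega

/-- if `μ/λ` is a strip of `k`-shapes then `∂λ \ ∂μ` is a
horizontal strip (at most one cell in each column). -/
theorem statement_12 (k : ℕ) (hk : 2 ≤ k) (r : ℕ) (lam mu : ℕ → ℕ)
    (h : IsStrip k r lam mu) :
    ∀ x y : Cell, x ∈ bdry k lam \ bdry k mu → y ∈ bdry k lam \ bdry k mu →
      x.2 = y.2 → x = y := by
  obtain ⟨hlam, hmu, hsub, hcol, _, _, hcs, _, _, _⟩ := h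
  have hlp : IsPartition lam := hlam.1
  have hmp : IsPartition mu := hmu.1
  rintro ⟨i, j⟩ ⟨i', j'⟩ hx hy hj
  simp only at hj
  subst hj
  obtain ⟨hxb, hxnb⟩ := hx
  obtain ⟨hyb, hynb⟩ := hy
  -- each such cell is a cell of mu
  have hxmu : j < mu i := lt_of_lt_of_le hxb.1 (hsub i)
  have hymu : j < mu i' := lt_of_lt_of_le hyb.1 (hsub i')
  -- bounds
  have hA : conj lam j ≤ i + csK k lam j := aux_lower_bound hlp hxb
  have hA' : conj lam j ≤ i' + csK k lam j := aux_lower_bound hlp hyb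
  have hB : i + csK k mu j + 1 ≤ conj mu j := aux_upper_bound hmp hxmu hxnb
  have hB' : i' + csK k mu j + 1 ≤ conj mu j := aux_upper_bound hmp hymu hynb
  -- horizontal strip: conj mu j ≤ conj lam j + 1
  have hC : conj mu j ≤ conj lam j + 1 := by
    by_contra hc
    push_neg at hc
    have h1 : (conj lam j, j) ∈ cellsOf mu \ cellsOf lam := by
      constructor
      · exact (aux_mem_iff_lt_conj hmp _ j).2 (by omega)
      · intro hcell
        have := (aux_mem_iff_lt_conj hlp (conj lam j) j).1 hcell
        omega
    have h2 : (conj lam j + 1, j) ∈ cellsOf mu \ cellsOf lam := by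
      constructor
      · exact (aux_mem_iff_lt_conj hmp _ j).2 (by omega)
      · intro hcell
        have := (aux_mem_iff_lt_conj hlp (conj lam j + 1) j).1 hcell
        omega
    have := hcol _ _ h1 h2 rfl
    simp at this
  have hD : csK k lam j ≤ csK k mu j := hcs j
  have : i = i' := by omega
  simp [this]
end
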